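/- Let Σ_c, Σ̂_c ∈ ℝ^{c×c} and Σ_r, Σ̂_r ∈ ℝ^{r×r} be symmetric invertible matrices, and let X, M, M̂ ∈ ℝ^{c×r}. Then the plug-in matrix-based Mahalanobis squared distance satisfies the deterministic perturbation bound |tr(Σ̂_c⁻¹ (X − M̂) Σ̂_r⁻¹ (X − M̂)ᵀ) − tr(Σ_c⁻¹ (X − M) Σ_r⁻¹ (X − M)ᵀ)| ≤ ‖Σ_c⁻¹‖ ‖Σ_r⁻¹‖ ‖Σ̂_r⁻¹‖ ‖Σ̂_r − Σ_r‖ ‖X − M‖_F² + ‖Σ_c⁻¹‖ ‖Σ̂_c⁻¹‖ ‖Σ̂_r⁻¹‖ ‖Σ̂_c − Σ_c‖ ‖X − M‖_F² + 2 ‖Σ̂_c⁻¹‖ ‖Σ̂_r⁻¹‖ ‖X − M‖_F ‖M̂ − M‖_F + ‖Σ̂_c⁻¹‖ ‖Σ̂_r⁻¹‖ ‖M̂ − M‖_F², where ‖·‖ denotes the ℓ²-operator norm and ‖·‖_F the Frobenius norm. -/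

import Mathlib

open Matrix
open scoped Matrix.Norms.L2Operator

/-- The ℓ²-operator norm of a real matrix, i.e. the operator norm of the associated
linear map between Euclidean spaces. -/
noncomputable def opNorm {m n : ℕ} (A : Matrix (Fin m) (Fin n) ℝ) : ℝ :=
  ‖LinearMap.toContinuousLinearMap (Matrix.toEuclideanLin A)‖

/-- The Frobenius norm of a real matrix: `‖U‖_F = √(tr(U Uᵀ))`. -/
noncomputable def frobNorm {m n : ℕ} (A : Matrix (Fin m) (Fin n) ℝ) : ℝ :=
  Real.sqrt ((A * Aᵀ).trace)

lemma opNorm_eq {m n : ℕ} (A : Matrix (Fin m) (Fin n) ℝ) : opNorm A = ‖A‖ := rfl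

lemma opNorm_nonneg {m n : ℕ} (A : Matrix (Fin m) (Fin n) ℝ) : 0 ≤ opNorm A := by
  rw [opNorm_eq]; exact norm_nonneg _

lemma opNorm_mul_le {m n l : ℕ} (A : Matrix (Fin m) (Fin n) ℝ) (B : Matrix (Fin n) (Fin l) ℝ) :
    opNorm (A * B) ≤ opNorm A * opNorm B := by
  simp only [opNorm_eq]; exact Matrix.l2_opNorm_mul A B

lemma opNorm_transpose {m n : ℕ} (A : Matrix (Fin m) (Fin n) ℝ) : opNorm Aᵀ = opNorm A := by
  have h : Aᴴ = Aᵀ := by ext i j; simp [Matrix.conjTranspose_apply]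
  simp only [opNorm_eq, ← h, Matrix.l2_opNorm_conjTranspose]

lemma opNorm_neg {m n : ℕ} (A : Matrix (Fin m) (Fin n) ℝ) : opNorm (-A) = opNorm A := by
  simp only [opNorm_eq, norm_neg]

lemma opNorm_triple_le {m n l k : ℕ} (P : Matrix (Fin m) (Fin n) ℝ)
    (Q : Matrix (Fin n) (Fin l) ℝ) (R : Matrix (Fin l) (Fin k) ℝ) :
    opNorm (P * Q * R) ≤ opNorm P * opNorm Q * opNorm R :=
  (opNorm_mul_le (P * Q) R).trans
    (mul_le_mul_of_nonneg_right (opNorm_mul_le P Q) (opNorm_nonneg R))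

lemma frobNorm_eq {m n : ℕ} (A : Matrix (Fin m) (Fin n) ℝ) :
    frobNorm A = Real.sqrt (∑ i, ∑ j, (A i j) ^ 2) := by
  simp [frobNorm, Matrix.trace, Matrix.mul_apply, Matrix.diag, sq]

lemma frobNorm_nonneg {m n : ℕ} (A : Matrix (Fin m) (Fin n) ℝ) : 0 ≤ frobNorm A :=
  Real.sqrt_nonneg _

lemma frobNorm_sq {m n : ℕ} (A : Matrix (Fin m) (Fin n) ℝ) :
    frobNorm A ^ 2 = ∑ i, ∑ j, (A i j) ^ 2 := by
  rw [frobNorm_eq, Real.sq_sqrt]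
  exact Finset.sum_nonneg fun i _ => Finset.sum_nonneg fun j _ => sq_nonneg _

lemma frobNorm_transpose {m n : ℕ} (A : Matrix (Fin m) (Fin n) ℝ) : frobNorm Aᵀ = frobNorm A := by
  rw [frobNorm_eq, frobNorm_eq, Finset.sum_comm]
  rfl

lemma frobNorm_neg {m n : ℕ} (A : Matrix (Fin m) (Fin n) ℝ) : frobNorm (-A) = frobNorm A := by
  simp [frobNorm_eq]

lemma abs_trace_mul_transpose_le {m n : ℕ} (W V : Matrix (Fin m) (Fin n) ℝ) :
    |(W * Vᵀ).trace| ≤ frobNorm W * frobNorm V := by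
  have htr : (W * Vᵀ).trace = ∑ p : Fin m × Fin n, W p.1 p.2 * V p.1 p.2 := by
    rw [Fintype.sum_prod_type]
    simp [Matrix.trace, Matrix.mul_apply, Matrix.diag]
  have hcs := Finset.sum_mul_sq_le_sq_mul_sq Finset.univ
    (fun p : Fin m × Fin n => W p.1 p.2) (fun p => V p.1 p.2)
  have h1 : (∑ p : Fin m × Fin n, W p.1 p.2 ^ 2) = frobNorm W ^ 2 := by
    rw [frobNorm_sq, Fintype.sum_prod_type]
  have h2 : (∑ p : Fin m × Fin n, V p.1 p.2 ^ 2) = frobNorm V ^ 2 := by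
    rw [frobNorm_sq, Fintype.sum_prod_type]
  rw [htr]
  have hy : 0 ≤ frobNorm W * frobNorm V := mul_nonneg (frobNorm_nonneg _) (frobNorm_nonneg _)
  calc |∑ p : Fin m × Fin n, W p.1 p.2 * V p.1 p.2|
      = Real.sqrt ((∑ p : Fin m × Fin n, W p.1 p.2 * V p.1 p.2) ^ 2) :=
        (Real.sqrt_sq_eq_abs _).symm
    _ ≤ Real.sqrt ((frobNorm W * frobNorm V) ^ 2) := by
        apply Real.sqrt_le_sqrt
        calc (∑ p : Fin m × Fin n, W p.1 p.2 * V p.1 p.2) ^ 2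
            ≤ (∑ p : Fin m × Fin n, W p.1 p.2 ^ 2) * ∑ p : Fin m × Fin n, V p.1 p.2 ^ 2 := hcs
          _ = (frobNorm W * frobNorm V) ^ 2 := by rw [h1, h2, mul_pow]
    _ = frobNorm W * frobNorm V := Real.sqrt_sq hy

lemma frobNorm_mul_le {m n l : ℕ} (A : Matrix (Fin m) (Fin n) ℝ) (U : Matrix (Fin n) (Fin l) ℝ) :
    frobNorm (A * U) ≤ opNorm A * frobNorm U := by
  have hrhs : 0 ≤ opNorm A * frobNorm U := mul_nonneg (opNorm_nonneg _) (frobNorm_nonneg _)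
  have hsq : frobNorm (A * U) ^ 2 ≤ (opNorm A * frobNorm U) ^ 2 := by
    rw [frobNorm_sq, Finset.sum_comm]
    have key : ∀ j : Fin l, (∑ i, ((A * U) i j) ^ 2) ≤ opNorm A ^ 2 * ∑ i, (U i j) ^ 2 := by
      intro j
      set x : EuclideanSpace ℝ (Fin n) := (EuclideanSpace.equiv (Fin n) ℝ).symm (fun i => U i j)
      have hx : ‖x‖ ^ 2 = ∑ i, (U i j) ^ 2 := by
        rw [EuclideanSpace.norm_eq, Real.sq_sqrt]
        · simp [x, sq_abs, sq]
        · exact Finset.sum_nonneg fun i _ => sq_nonneg _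
      have hAx := Matrix.l2_opNorm_mulVec A x
      have hnorm : ‖(EuclideanSpace.equiv (Fin m) ℝ).symm (A *ᵥ x)‖ ^ 2
          = ∑ i, ((A * U) i j) ^ 2 := by
        rw [EuclideanSpace.norm_eq, Real.sq_sqrt]
        · apply Finset.sum_congr rfl
          intro i _
          simp [Matrix.mul_apply, Matrix.mulVec, dotProduct, sq_abs, x]
        · exact Finset.sum_nonneg fun i _ => sq_nonneg _
      calc (∑ i, ((A * U) i j) ^ 2) = ‖(EuclideanSpace.equiv (Fin m) ℝ).symm (A *ᵥ x)‖ ^ 2 :=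
            hnorm.symm
        _ ≤ (‖A‖ * ‖x‖) ^ 2 := by
            apply pow_le_pow_left₀ (norm_nonneg _) hAx
        _ = opNorm A ^ 2 * ∑ i, (U i j) ^ 2 := by rw [mul_pow, hx, opNorm_eq]
    calc (∑ j, ∑ i, ((A * U) i j) ^ 2) ≤ ∑ j, opNorm A ^ 2 * ∑ i, (U i j) ^ 2 :=
          Finset.sum_le_sum fun j _ => key j
      _ = opNorm A ^ 2 * ∑ j, ∑ i, (U i j) ^ 2 := by rw [Finset.mul_sum]
      _ = (opNorm A * frobNorm U) ^ 2 := by rw [mul_pow, frobNorm_sq, Finset.sum_comm]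
  calc frobNorm (A * U) = Real.sqrt (frobNorm (A * U) ^ 2) :=
        (Real.sqrt_sq (frobNorm_nonneg _)).symm
    _ ≤ Real.sqrt ((opNorm A * frobNorm U) ^ 2) := Real.sqrt_le_sqrt hsq
    _ = opNorm A * frobNorm U := Real.sqrt_sq hrhs

lemma frobNorm_mul_le_right {m n l : ℕ} (U : Matrix (Fin m) (Fin n) ℝ)
    (B : Matrix (Fin n) (Fin l) ℝ) :
    frobNorm (U * B) ≤ opNorm B * frobNorm U := by
  rw [← frobNorm_transpose (U * B), Matrix.transpose_mul]
  calc frobNorm (Bᵀ * Uᵀ) ≤ opNorm Bᵀ * frobNorm Uᵀ := frobNorm_mul_le _ _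
    _ = opNorm B * frobNorm U := by rw [opNorm_transpose, frobNorm_transpose]

/-- Core bound: `|tr(A U B Vᵀ)| ≤ ‖A‖ ‖B‖ ‖U‖_F ‖V‖_F`. -/
lemma abs_trace_four_le {m k l n : ℕ} (A : Matrix (Fin m) (Fin k) ℝ)
    (U : Matrix (Fin k) (Fin l) ℝ) (B : Matrix (Fin l) (Fin n) ℝ)
    (V : Matrix (Fin m) (Fin n) ℝ) :
    |(A * U * B * Vᵀ).trace| ≤ opNorm A * opNorm B * frobNorm U * frobNorm V := by
  calc |(A * U * B * Vᵀ).trace| ≤ frobNorm (A * U * B) * frobNorm V :=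
        abs_trace_mul_transpose_le _ _
    _ ≤ opNorm A * opNorm B * frobNorm U * frobNorm V := by
        apply mul_le_mul_of_nonneg_right _ (frobNorm_nonneg V)
        calc frobNorm (A * U * B) ≤ opNorm B * frobNorm (A * U) := frobNorm_mul_le_right _ _
          _ ≤ opNorm B * (opNorm A * frobNorm U) :=
              mul_le_mul_of_nonneg_left (frobNorm_mul_le A U) (opNorm_nonneg B)
          _ = opNorm A * opNorm B * frobNorm U := by ring

/-- Deterministic perturbation bound for the plug-in matrix-based Mahalanobis squared
distance: for symmetric invertible `Sc, Ŝc ∈ ℝ^{c×c}`, `Sr, Ŝr ∈ ℝ^{r×r}` and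
`X, M, M̂ ∈ ℝ^{c×r}`,
`|tr(Ŝc⁻¹ (X − M̂) Ŝr⁻¹ (X − M̂)ᵀ) − tr(Sc⁻¹ (X − M) Sr⁻¹ (X − M)ᵀ)|
  ≤ ‖Sc⁻¹‖ ‖Sr⁻¹‖ ‖Ŝr⁻¹‖ ‖Ŝr − Sr‖ ‖X − M‖_F²
  + ‖Sc⁻¹‖ ‖Ŝc⁻¹‖ ‖Ŝr⁻¹‖ ‖Ŝc − Sc‖ ‖X − M‖_F²
  + 2 ‖Ŝc⁻¹‖ ‖Ŝr⁻¹‖ ‖X − M‖_F ‖M̂ − M‖_F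
  + ‖Ŝc⁻¹‖ ‖Ŝr⁻¹‖ ‖M̂ − M‖_F²`,
with ℓ²-operator norms on square matrices and Frobenius norms on the `c × r` matrices. -/
theorem plugin_matrix_msd_perturbation_bound {c r : ℕ}
    (Sc Schat : Matrix (Fin c) (Fin c) ℝ) (Sr Srhat : Matrix (Fin r) (Fin r) ℝ)
    (hSc_symm : Scᵀ = Sc) (hSchat_symm : Schatᵀ = Schat)
    (hSr_symm : Srᵀ = Sr) (hSrhat_symm : Srhatᵀ = Srhat)
    (hSc : IsUnit Sc.det) (hSchat : IsUnit Schat.det)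
    (hSr : IsUnit Sr.det) (hSrhat : IsUnit Srhat.det)
    (X M Mhat : Matrix (Fin c) (Fin r) ℝ) :
    |(Schat⁻¹ * (X - Mhat) * Srhat⁻¹ * (X - Mhat)ᵀ).trace
        - (Sc⁻¹ * (X - M) * Sr⁻¹ * (X - M)ᵀ).trace| ≤
      opNorm Sc⁻¹ * opNorm Sr⁻¹ * opNorm Srhat⁻¹ * opNorm (Srhat - Sr) * frobNorm (X - M) ^ 2
        + opNorm Sc⁻¹ * opNorm Schat⁻¹ * opNorm Srhat⁻¹ * opNorm (Schat - Sc)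
            * frobNorm (X - M) ^ 2
        + 2 * opNorm Schat⁻¹ * opNorm Srhat⁻¹ * frobNorm (X - M) * frobNorm (Mhat - M)
        + opNorm Schat⁻¹ * opNorm Srhat⁻¹ * frobNorm (Mhat - M) ^ 2 := by
  set E : Matrix (Fin c) (Fin r) ℝ := X - M with hEdef
  set D : Matrix (Fin c) (Fin r) ℝ := M - Mhat with hDdef
  have hXM : X - Mhat = E + D := by rw [hEdef, hDdef]; abel
  -- inverse difference identities
  have hA : Schat⁻¹ - Sc⁻¹ = -(Schat⁻¹ * (Schat - Sc) * Sc⁻¹) := by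
    have h1 : Schat⁻¹ * (Schat - Sc) * Sc⁻¹
        = Schat⁻¹ * Schat * Sc⁻¹ - Schat⁻¹ * (Sc * Sc⁻¹) := by noncomm_ring
    rw [h1, Matrix.nonsing_inv_mul _ hSchat, Matrix.mul_nonsing_inv _ hSc,
      Matrix.one_mul, Matrix.mul_one]
    abel
  have hB : Srhat⁻¹ - Sr⁻¹ = -(Sr⁻¹ * (Srhat - Sr) * Srhat⁻¹) := by
    have h1 : Sr⁻¹ * (Srhat - Sr) * Srhat⁻¹
        = Sr⁻¹ * (Srhat * Srhat⁻¹) - Sr⁻¹ * Sr * Srhat⁻¹ := by noncomm_ring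
    rw [h1, Matrix.mul_nonsing_inv _ hSrhat, Matrix.nonsing_inv_mul _ hSr,
      Matrix.one_mul, Matrix.mul_one]
    abel
  -- decomposition of the trace difference
  have hid : (Schat⁻¹ * (X - Mhat) * Srhat⁻¹ * (X - Mhat)ᵀ).trace
        - (Sc⁻¹ * E * Sr⁻¹ * Eᵀ).trace
      = ((Schat⁻¹ - Sc⁻¹) * E * Srhat⁻¹ * Eᵀ).trace
        + (Sc⁻¹ * E * (Srhat⁻¹ - Sr⁻¹) * Eᵀ).trace
        + (Schat⁻¹ * D * Srhat⁻¹ * Eᵀ).trace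
        + (Schat⁻¹ * E * Srhat⁻¹ * Dᵀ).trace
        + (Schat⁻¹ * D * Srhat⁻¹ * Dᵀ).trace := by
    rw [hXM]
    simp only [Matrix.transpose_add, Matrix.mul_add, Matrix.add_mul, Matrix.sub_mul,
      Matrix.mul_sub, Matrix.trace_add, Matrix.trace_sub]
    ring
  rw [hid]
  -- bounds for the five terms
  have hb1 : |((Schat⁻¹ - Sc⁻¹) * E * Srhat⁻¹ * Eᵀ).trace|
      ≤ opNorm Schat⁻¹ * opNorm (Schat - Sc) * opNorm Sc⁻¹ * opNorm Srhat⁻¹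
          * frobNorm E * frobNorm E := by
    calc |((Schat⁻¹ - Sc⁻¹) * E * Srhat⁻¹ * Eᵀ).trace|
        ≤ opNorm (Schat⁻¹ - Sc⁻¹) * opNorm Srhat⁻¹ * frobNorm E * frobNorm E :=
          abs_trace_four_le _ _ _ _
      _ ≤ opNorm Schat⁻¹ * opNorm (Schat - Sc) * opNorm Sc⁻¹ * opNorm Srhat⁻¹
          * frobNorm E * frobNorm E := by
          have h := opNorm_triple_le Schat⁻¹ (Schat - Sc) Sc⁻¹
          rw [hA, opNorm_neg]
          have h2 : 0 ≤ opNorm Srhat⁻¹ * frobNorm E * frobNorm E :=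
            mul_nonneg (mul_nonneg (opNorm_nonneg _) (frobNorm_nonneg _)) (frobNorm_nonneg _)
          nlinarith [opNorm_nonneg (Schat⁻¹ * (Schat - Sc) * Sc⁻¹)]
  have hb2 : |(Sc⁻¹ * E * (Srhat⁻¹ - Sr⁻¹) * Eᵀ).trace|
      ≤ opNorm Sc⁻¹ * (opNorm Sr⁻¹ * opNorm (Srhat - Sr) * opNorm Srhat⁻¹)
          * frobNorm E * frobNorm E := by
    calc |(Sc⁻¹ * E * (Srhat⁻¹ - Sr⁻¹) * Eᵀ).trace|
        ≤ opNorm Sc⁻¹ * opNorm (Srhat⁻¹ - Sr⁻¹) * frobNorm E * frobNorm E :=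
          abs_trace_four_le _ _ _ _
      _ ≤ opNorm Sc⁻¹ * (opNorm Sr⁻¹ * opNorm (Srhat - Sr) * opNorm Srhat⁻¹)
          * frobNorm E * frobNorm E := by
          have h := opNorm_triple_le Sr⁻¹ (Srhat - Sr) Srhat⁻¹
          rw [hB, opNorm_neg]
          nlinarith [opNorm_nonneg (Sr⁻¹ * (Srhat - Sr) * Srhat⁻¹), opNorm_nonneg Sc⁻¹,
            frobNorm_nonneg E, mul_nonneg (frobNorm_nonneg E) (frobNorm_nonneg E),
            mul_nonneg (opNorm_nonneg Sc⁻¹)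
              (mul_nonneg (frobNorm_nonneg E) (frobNorm_nonneg E))]
  have hb3 : |(Schat⁻¹ * D * Srhat⁻¹ * Eᵀ).trace|
      ≤ opNorm Schat⁻¹ * opNorm Srhat⁻¹ * frobNorm D * frobNorm E :=
    abs_trace_four_le _ _ _ _
  have hb4 : |(Schat⁻¹ * E * Srhat⁻¹ * Dᵀ).trace|
      ≤ opNorm Schat⁻¹ * opNorm Srhat⁻¹ * frobNorm E * frobNorm D :=
    abs_trace_four_le _ _ _ _
  have hb5 : |(Schat⁻¹ * D * Srhat⁻¹ * Dᵀ).trace|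
      ≤ opNorm Schat⁻¹ * opNorm Srhat⁻¹ * frobNorm D * frobNorm D :=
    abs_trace_four_le _ _ _ _
  have hD : frobNorm D = frobNorm (Mhat - M) := by
    rw [hDdef, ← frobNorm_neg (M - Mhat), neg_sub]
  have abs5 : ∀ a b c d e : ℝ, |a + b + c + d + e| ≤ |a| + |b| + |c| + |d| + |e| := by
    intro a b c d e
    calc |a + b + c + d + e| ≤ |a + b + c + d| + |e| := abs_add_le _ _
      _ ≤ (|a + b + c| + |d|) + |e| := add_le_add_left (abs_add_le _ _) _
      _ ≤ ((|a + b| + |c|) + |d|) + |e| := by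
          have := abs_add_le (a + b) c
          linarith
      _ ≤ |a| + |b| + |c| + |d| + |e| := by
          have := abs_add_le a b
          linarith
  have habs : |((Schat⁻¹ - Sc⁻¹) * E * Srhat⁻¹ * Eᵀ).trace
        + (Sc⁻¹ * E * (Srhat⁻¹ - Sr⁻¹) * Eᵀ).trace
        + (Schat⁻¹ * D * Srhat⁻¹ * Eᵀ).trace
        + (Schat⁻¹ * E * Srhat⁻¹ * Dᵀ).trace
        + (Schat⁻¹ * D * Srhat⁻¹ * Dᵀ).trace|
      ≤ |((Schat⁻¹ - Sc⁻¹) * E * Srhat⁻¹ * Eᵀ).trace|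
        + |(Sc⁻¹ * E * (Srhat⁻¹ - Sr⁻¹) * Eᵀ).trace|
        + |(Schat⁻¹ * D * Srhat⁻¹ * Eᵀ).trace|
        + |(Schat⁻¹ * E * Srhat⁻¹ * Dᵀ).trace|
        + |(Schat⁻¹ * D * Srhat⁻¹ * Dᵀ).trace| := abs5 _ _ _ _ _
  calc _ ≤ _ := habs
    _ ≤ opNorm Schat⁻¹ * opNorm (Schat - Sc) * opNorm Sc⁻¹ * opNorm Srhat⁻¹
          * frobNorm E * frobNorm E
        + opNorm Sc⁻¹ * (opNorm Sr⁻¹ * opNorm (Srhat - Sr) * opNorm Srhat⁻¹)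
          * frobNorm E * frobNorm E
        + opNorm Schat⁻¹ * opNorm Srhat⁻¹ * frobNorm D * frobNorm E
        + opNorm Schat⁻¹ * opNorm Srhat⁻¹ * frobNorm E * frobNorm D
        + opNorm Schat⁻¹ * opNorm Srhat⁻¹ * frobNorm D * frobNorm D := by
        linarith [hb1, hb2, hb3, hb4, hb5]
    _ = _ := by rw [hD]; ring
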